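/- (Deterministic core of the mean-square stability characterization (3.7) in the Example.) Under the stated setup, M(t) → 0 as t → ∞ if and only if c² + d² + 2cd·e^{bα} < −2b. -/

import Mathlib

open MeasureTheory Filter Set intervalIntegral

/-- bounded measurable on Icc implies interval integrable -/
lemma bddIntInt {f : ℝ → ℝ} (hm : Measurable f) {a b C : ℝ}
    (hab : a ≤ b) (h : ∀ t ∈ Set.Icc a b, |f t| ≤ C) :
    IntervalIntegrable f MeasureTheory.volume a b := by
  rw [intervalIntegrable_iff_integrableOn_Ioc_of_le hab]
  apply Measure.integrableOn_of_bounded (M := C) (by simp)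
    hm.aestronglyMeasurable
  filter_upwards [ae_restrict_mem measurableSet_Ioc] with t ht
  exact h t ⟨le_of_lt ht.1, ht.2⟩

lemma expInt (k a u : ℝ) (hk : k ≠ 0) :
    ∫ t in a..u, Real.exp (k*t) = (Real.exp (k*u) - Real.exp (k*a))/k := by
  rw [integral_comp_mul_left (fun t => Real.exp t) hk]
  simp [integral_exp, smul_eq_mul]
  try field_simp
  try ring

lemma g0_meas (α b c2 B : ℝ) :
    Measurable (fun v => (if v < α then c2 else B) * Real.exp (2*b*v)) := by
  apply Measurable.mul
  · exact Measurable.ite (measurableSet_lt measurable_id measurable_const)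
      measurable_const measurable_const
  · exact (Real.measurable_exp.comp (measurable_const.mul measurable_id))

lemma g0_bdd (α b c2 B : ℝ) (hb : b < 0) (hc2 : 0 ≤ c2) (hB : 0 ≤ B) :
    ∀ v : ℝ, 0 ≤ v → |(if v < α then c2 else B) * Real.exp (2*b*v)| ≤ c2 + B := by
  intro v hv
  have he : Real.exp (2*b*v) ≤ 1 := by
    rw [Real.exp_le_one_iff]
    nlinarith
  have he0 : 0 < Real.exp (2*b*v) := Real.exp_pos _
  rw [abs_mul, abs_of_nonneg (by positivity : (0:ℝ) ≤ Real.exp (2*b*v))]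
  by_cases h : v < α
  · rw [if_pos h, abs_of_nonneg hc2]; nlinarith
  · rw [if_neg h, abs_of_nonneg hB]; nlinarith

lemma g0_intInt (α b c2 B : ℝ) (hb : b < 0) (hc2 : 0 ≤ c2) (hB : 0 ≤ B)
    {p q : ℝ} (h0 : 0 ≤ p) (hpq : p ≤ q) :
    IntervalIntegrable (fun v => (if v < α then c2 else B) * Real.exp (2*b*v))
      MeasureTheory.volume p q := by
  apply bddIntInt (g0_meas α b c2 B) hpq
  intro t ht
  exact g0_bdd α b c2 B hb hc2 hB t (le_trans h0 ht.1)

lemma Gf_eval (α b c2 B : ℝ) (hα : 0 < α) (hb : b < 0) (hc2 : 0 ≤ c2) (hB : 0 ≤ B)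
    (u : ℝ) (hu : 0 ≤ u) :
    ∫ v in (0:ℝ)..u, (if v < α then c2 else B) * Real.exp (2*b*v)
      = (c2 * (Real.exp (2*b*(min u α)) - 1)
          + B * (Real.exp (2*b*u) - Real.exp (2*b*(min u α)))) / (2*b) := by
  have h2b : (2*b) ≠ 0 := by linarith
  have hne : ∀ᵐ (v:ℝ) ∂(volume : Measure ℝ), v ≠ α := by
    rw [ae_iff]
    have : {v : ℝ | ¬ v ≠ α} = {α} := by ext v; simp
    rw [this]
    exact Real.volume_singleton
  have head : ∀ w, 0 ≤ w → w ≤ α →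
      ∫ v in (0:ℝ)..w, (if v < α then c2 else B) * Real.exp (2*b*v)
        = c2 * ((Real.exp (2*b*w) - 1)/(2*b)) := by
    intro w hw hwα
    have : ∫ v in (0:ℝ)..w, (if v < α then c2 else B) * Real.exp (2*b*v)
        = ∫ v in (0:ℝ)..w, c2 * Real.exp (2*b*v) := by
      apply intervalIntegral.integral_congr_ae
      filter_upwards [hne] with v hv hvI
      rw [uIoc_of_le hw] at hvI
      rw [if_pos (lt_of_le_of_ne (le_trans hvI.2 hwα) hv)]
    rw [this, intervalIntegral.integral_const_mul]
    have := expInt (2*b) 0 w h2b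
    simp only [mul_zero, Real.exp_zero] at this
    rw [this]
  rcases le_total u α with hcase | hcase
  · rw [min_eq_left hcase, head u hu hcase]; ring
  · rw [min_eq_right hcase]
    rw [← integral_add_adjacent_intervals (a := (0:ℝ)) (b := α) (c := u)
      (g0_intInt α b c2 B hb hc2 hB le_rfl hα.le)
      (g0_intInt α b c2 B hb hc2 hB hα.le hcase)]
    rw [head α hα.le le_rfl]
    have tail : ∫ v in α..u, (if v < α then c2 else B) * Real.exp (2*b*v)
        = B * ((Real.exp (2*b*u) - Real.exp (2*b*α))/(2*b)) := by
      have : ∫ v in α..u, (if v < α then c2 else B) * Real.exp (2*b*v)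
          = ∫ v in α..u, B * Real.exp (2*b*v) := by
        apply integral_congr
        intro v hv
        rw [uIcc_of_le hcase] at hv
        dsimp only
        rw [if_neg (not_lt.2 hv.1)]
      rw [this, intervalIntegral.integral_const_mul, expInt (2*b) α u h2b]
    rw [tail]
    try field_simp
    try ring

lemma fubini_conv (g₀ y : ℝ → ℝ) (hg : Measurable g₀) (hy : Measurable y)
    {T C K : ℝ} (hT : 0 ≤ T)
    (hgb : ∀ v ∈ Set.Icc (0:ℝ) T, |g₀ v| ≤ C)
    (hyb : ∀ s ∈ Set.Icc (0:ℝ) T, |y s| ≤ K) :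
    (∫ t in (0:ℝ)..T, ∫ s in (0:ℝ)..t, g₀ (t-s) * y s)
      = ∫ s in (0:ℝ)..T, y s * ∫ v in (0:ℝ)..(T-s), g₀ v := by
  have hC : 0 ≤ C := le_trans (abs_nonneg _) (hgb 0 ⟨le_refl _, hT⟩)
  have hK : 0 ≤ K := le_trans (abs_nonneg _) (hyb 0 ⟨le_refl _, hT⟩)
  set F : ℝ → ℝ → ℝ := fun t s => if s ≤ t then g₀ (t-s) * y s else 0 with hF
  have hFmeas : Measurable (Function.uncurry F) := by
    apply Measurable.ite (measurableSet_le measurable_snd measurable_fst)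
    · exact (hg.comp (measurable_fst.sub measurable_snd)).mul (hy.comp measurable_snd)
    · exact measurable_const
  have hInt : Integrable (Function.uncurry F)
      ((volume.restrict (Ioc (0:ℝ) T)).prod (volume.restrict (Ioc (0:ℝ) T))) := by
    rw [Measure.prod_restrict]
    apply Measure.integrableOn_of_bounded (M := C*K)
    · simp [Measure.prod_prod, Real.volume_Ioc]
      exact ENNReal.mul_ne_top ENNReal.ofReal_ne_top ENNReal.ofReal_ne_top
    · exact hFmeas.aestronglyMeasurable
    · filter_upwards [ae_restrict_mem ((measurableSet_Ioc).prod (measurableSet_Ioc))] with p hp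
      obtain ⟨hp1, hp2⟩ := hp
      simp only [Function.uncurry, hF]
      by_cases h : p.2 ≤ p.1
      · rw [if_pos h]
        rw [Real.norm_eq_abs, abs_mul]
        apply mul_le_mul (hgb _ ⟨by linarith [hp2.1], by linarith [hp1.2, hp2.1]⟩)
          (hyb _ ⟨hp2.1.le, hp2.2⟩) (abs_nonneg _) hC
      · rw [if_neg h]; simp [mul_nonneg hC hK]
  have step1 : (∫ t in (0:ℝ)..T, ∫ s in (0:ℝ)..t, g₀ (t-s) * y s)
      = ∫ t in Ioc (0:ℝ) T, ∫ s in Ioc (0:ℝ) T, F t s := by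
    rw [integral_of_le hT]
    apply setIntegral_congr_fun measurableSet_Ioc
    intro t ht
    dsimp only
    rw [integral_of_le ht.1.le]
    have : ∫ s in Ioc (0:ℝ) T, F t s
        = ∫ s in Ioc (0:ℝ) T, (Iic t).indicator (fun s => g₀ (t-s) * y s) s := by
      apply setIntegral_congr_fun measurableSet_Ioc
      intro s _
      simp only [hF, Set.indicator_apply, mem_Iic]
    rw [this, setIntegral_indicator measurableSet_Iic]
    congr 1
    rw [Set.Ioc_inter_Iic, min_eq_right ht.2]
  have step2 : (∫ t in Ioc (0:ℝ) T, ∫ s in Ioc (0:ℝ) T, F t s)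
      = ∫ s in Ioc (0:ℝ) T, ∫ t in Ioc (0:ℝ) T, F t s := by
    exact integral_integral_swap hInt
  have step3 : (∫ s in Ioc (0:ℝ) T, ∫ t in Ioc (0:ℝ) T, F t s)
      = ∫ s in (0:ℝ)..T, y s * ∫ v in (0:ℝ)..(T-s), g₀ v := by
    rw [integral_of_le hT]
    apply setIntegral_congr_fun measurableSet_Ioc
    intro s hs
    dsimp only
    have e1 : ∫ t in Ioc (0:ℝ) T, F t s
        = ∫ t in Ioc (0:ℝ) T, (Ici s).indicator (fun t => g₀ (t-s) * y s) t := by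
      apply setIntegral_congr_fun measurableSet_Ioc
      intro t _
      simp only [hF, Set.indicator_apply, mem_Ici]
    rw [e1, setIntegral_indicator measurableSet_Ici]
    have e2 : Ioc (0:ℝ) T ∩ Ici s = Icc s T := by
      ext t
      simp only [mem_inter_iff, mem_Ioc, mem_Ici, mem_Icc]
      constructor
      · rintro ⟨⟨_, h2⟩, h3⟩; exact ⟨h3, h2⟩
      · rintro ⟨h1, h2⟩; exact ⟨⟨lt_of_lt_of_le hs.1 h1, h2⟩, h1⟩
    rw [e2, integral_Icc_eq_integral_Ioc, ← integral_of_le hs.2,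
      intervalIntegral.integral_mul_const, integral_comp_sub_right (fun v => g₀ v) s, sub_self,
      mul_comm]
  rw [step1, step2, step3]

lemma Gf_bounds (α b c2 B : ℝ) (hα : 0 < α) (hb : b < 0) (hc2 : 0 ≤ c2) (hB : 0 ≤ B)
    (u : ℝ) (hu : 0 ≤ u) :
    0 ≤ (c2 * (Real.exp (2*b*(min u α)) - 1)
          + B * (Real.exp (2*b*u) - Real.exp (2*b*(min u α)))) / (2*b)
    ∧ (c2 * (Real.exp (2*b*(min u α)) - 1)
          + B * (Real.exp (2*b*u) - Real.exp (2*b*(min u α)))) / (2*b) ≤ (c2+B)/(-(2*b))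
    ∧ (c2 * (Real.exp (2*b*(min u α)) - 1)
          + B * (Real.exp (2*b*u) - Real.exp (2*b*(min u α)))) / (2*b)
        ≤ (c2*(1 - Real.exp (2*b*α)) + B*Real.exp (2*b*α)) / (-(2*b))
    ∧ (c2*(1 - Real.exp (2*b*α)) + B*Real.exp (2*b*α)) / (-(2*b))
        - (c2 * (Real.exp (2*b*(min u α)) - 1)
          + B * (Real.exp (2*b*u) - Real.exp (2*b*(min u α)))) / (2*b)
        ≤ ((c2+B)/(-(2*b))) * Real.exp (2*b*u) := by
  have hβ : (0:ℝ) < -(2*b) := by linarith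
  have hm0 : 0 ≤ min u α := le_min hu hα.le
  have hmu : min u α ≤ u := min_le_left _ _
  have hmα : min u α ≤ α := min_le_right _ _
  set Eu := Real.exp (2*b*u) with hEu
  set Em := Real.exp (2*b*(min u α)) with hEm
  set Ea := Real.exp (2*b*α) with hEa
  have hEu0 : 0 < Eu := Real.exp_pos _
  have hEm0 : 0 < Em := Real.exp_pos _
  have hEa0 : 0 < Ea := Real.exp_pos _
  have hEm1 : Em ≤ 1 := Real.exp_le_one_iff.2 (by nlinarith)
  have hEu1 : Eu ≤ 1 := Real.exp_le_one_iff.2 (by nlinarith)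
  have hEum : Eu ≤ Em := Real.exp_le_exp.2 (by nlinarith)
  have key : (c2 * (Em - 1) + B * (Eu - Em)) / (2*b)
      = (c2 * (1 - Em) + B * (Em - Eu)) / (-(2*b)) := by
    rw [div_eq_div_iff (by linarith) (by linarith)]
    ring
  rw [key]
  have hEma : Ea ≤ Em := Real.exp_le_exp.2 (by nlinarith)
  refine ⟨div_nonneg (by nlinarith) hβ.le, ?_, ?_, ?_⟩
  · exact (div_le_div_iff_of_pos_right hβ).2 (by nlinarith)
  · apply (div_le_div_iff_of_pos_right hβ).2
    rcases le_total u α with hc | hc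
    · rw [min_eq_left hc] at hEm
      have : Em = Eu := by rw [hEm, hEu]
      nlinarith [this]
    · rw [min_eq_right hc] at hEm
      have : Em = Ea := by rw [hEm, hEa]
      nlinarith [this]
  · rw [div_sub_div_same, div_mul_eq_mul_div]
    apply (div_le_div_iff_of_pos_right hβ).2
    rcases le_total u α with hc | hc
    · rw [min_eq_left hc] at hEm
      have : Em = Eu := by rw [hEm, hEu]
      nlinarith [this]
    · rw [min_eq_right hc] at hEm
      have : Em = Ea := by rw [hEm, hEa]
      nlinarith [this]

set_option maxHeartbeats 2000000 in
/-- Deterministic core of the mean-square stability characterization (3.7)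
in the Example. -/
theorem stmt13 (α b c d : ℝ) (hα : 0 < α) (hb : b < 0)
    (hnondeg : ¬ (c * d < 0 ∧ b = (1 / α) * Real.log (-d / c)))
    (r : ℝ → ℝ) (hr : ∀ t : ℝ, r t = if 0 ≤ t then Real.exp (b * t) else 0)
    (x₀ : ℝ) (hx₀ : x₀ ≠ 0)
    (x : ℝ → ℝ) (hx : ∀ t : ℝ, x t = x₀ * Real.exp (b * t))
    (f g : ℝ → ℝ)
    (hf : ∀ t ≥ (0:ℝ), f t = (c * x t + d * x (t - α)) ^ 2)
    (hg : ∀ t ≥ (0:ℝ), g t = (c * r t + d * r (t - α)) ^ 2)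
    (y : ℝ → ℝ) (hymeas : Measurable y) (hynn : ∀ t ≥ (0:ℝ), 0 ≤ y t)
    (hybdd : ∀ T : ℝ, ∃ K : ℝ, ∀ t ∈ Set.Icc (0:ℝ) T, y t ≤ K)
    (hren : ∀ t ≥ (0:ℝ), y t = f t + ∫ s in (0:ℝ)..t, g (t - s) * y s)
    (M : ℝ → ℝ)
    (hM : ∀ t ≥ (0:ℝ), M t = (x t) ^ 2 + ∫ s in (0:ℝ)..t, (r (t - s)) ^ 2 * y s) :
    Tendsto M atTop (nhds 0)
      ↔ c ^ 2 + d ^ 2 + 2 * c * d * Real.exp (b * α) < -2 * b := by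
  have h2b : (2*b) < 0 := by linarith
  have hβ : (0:ℝ) < -(2*b) := by linarith
  set β : ℝ := -(2*b) with hβdef
  set B : ℝ := (c + d * Real.exp (-(b*α)))^2 with hBdef
  set A : ℝ := x₀^2 * B with hAdef
  set L : ℝ := (c^2*(1 - Real.exp (2*b*α)) + B*Real.exp (2*b*α)) / β with hLdef
  set g₀ : ℝ → ℝ := fun v => (if v < α then c^2 else B) * Real.exp (2*b*v) with hg₀def
  set Gf : ℝ → ℝ := fun u => (c^2 * (Real.exp (2*b*(min u α)) - 1)
      + B * (Real.exp (2*b*u) - Real.exp (2*b*(min u α)))) / (2*b) with hGfdef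
  have hB0 : 0 ≤ B := sq_nonneg _
  have hc20 : (0:ℝ) ≤ c^2 := sq_nonneg _
  have hsq : ∀ w : ℝ, Real.exp (b*w) ^ 2 = Real.exp (2*b*w) := by
    intro w; rw [sq, ← Real.exp_add]; ring_nf
  -- g agrees with g₀ on [0, ∞)
  have hgg₀ : ∀ v : ℝ, 0 ≤ v → g v = g₀ v := by
    intro v hv
    rw [hg v hv, hr v, hr (v - α), if_pos hv]
    by_cases h : v < α
    · rw [if_neg (by linarith : ¬ (0:ℝ) ≤ v - α)]
      simp only [hg₀def, if_pos h]
      rw [← hsq v]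
      ring
    · rw [if_pos (by push_neg at h; linarith : (0:ℝ) ≤ v - α)]
      simp only [hg₀def, if_neg h]
      have e1 : Real.exp (b*(v-α)) = Real.exp (-(b*α)) * Real.exp (b*v) := by
        rw [← Real.exp_add]; ring_nf
      rw [e1, hBdef, ← hsq v]
      ring
  -- f is A e^{2bt}
  have hfA : ∀ t : ℝ, 0 ≤ t → f t = A * Real.exp (2*b*t) := by
    intro t ht
    rw [hf t ht, hx t, hx (t - α)]
    have e1 : Real.exp (b*(t-α)) = Real.exp (-(b*α)) * Real.exp (b*t) := by
      rw [← Real.exp_add]; ring_nf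
    rw [e1, hAdef, hBdef, ← hsq t]
    ring
  have hxsq : ∀ t : ℝ, (x t)^2 = x₀^2 * Real.exp (2*b*t) := by
    intro t; rw [hx t, ← hsq t]; ring
  -- Gf is the integral of g₀
  have hGfInt : ∀ u : ℝ, 0 ≤ u → (∫ v in (0:ℝ)..u, g₀ v) = Gf u := by
    intro u hu
    exact Gf_eval α b (c^2) B hα hb hc20 hB0 u hu
  
  -- Gf bounds
  have hGfB := fun (u:ℝ) (hu : 0 ≤ u) => Gf_bounds α b (c^2) B hα hb hc20 hB0 u hu
  have hGfnn : ∀ u:ℝ, 0 ≤ u → 0 ≤ Gf u := fun u hu => (hGfB u hu).1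
  have hGfub : ∀ u:ℝ, 0 ≤ u → Gf u ≤ (c^2+B)/β := fun u hu => (hGfB u hu).2.1
  have hGfL : ∀ u:ℝ, 0 ≤ u → Gf u ≤ L := fun u hu => (hGfB u hu).2.2.1
  have hGfLb : ∀ u:ℝ, 0 ≤ u → L - Gf u ≤ ((c^2+B)/β) * Real.exp (2*b*u) :=
    fun u hu => (hGfB u hu).2.2.2
  have hGfmeas : Measurable Gf := by
    rw [hGfdef]
    fun_prop
  -- y bounds and integrability
  have hyK : ∀ T:ℝ, 0 ≤ T → ∃ K, 0 ≤ K ∧ ∀ s ∈ Set.Icc (0:ℝ) T, |y s| ≤ K := by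
    intro T hT
    obtain ⟨K, hK⟩ := hybdd T
    refine ⟨max K 0, le_max_right _ _, ?_⟩
    intro s hs
    rw [abs_of_nonneg (hynn s hs.1)]
    exact le_trans (hK s hs) (le_max_left _ _)
  have hyII : ∀ p q : ℝ, 0 ≤ p → p ≤ q → IntervalIntegrable y volume p q := by
    intro p q hp hpq
    obtain ⟨K, hK0, hK⟩ := hyK q (hp.trans hpq)
    exact bddIntInt hymeas hpq (fun t ht => hK t ⟨hp.trans ht.1, ht.2⟩)
  -- the convolution with g equals the convolution with g₀
  have hconv : ∀ t:ℝ, 0 ≤ t →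
      (∫ s in (0:ℝ)..t, g (t-s) * y s) = ∫ s in (0:ℝ)..t, g₀ (t-s) * y s := by
    intro t ht
    apply integral_congr
    intro s hs
    rw [uIcc_of_le ht] at hs
    dsimp only
    rw [hgg₀ (t-s) (by linarith [hs.2] : (0:ℝ) ≤ t - s)]
  have hyeq : ∀ t:ℝ, 0 ≤ t →
      y t = A * Real.exp (2*b*t) + ∫ s in (0:ℝ)..t, g₀ (t-s) * y s := by
    intro t ht
    rw [hren t ht, hfA t ht, hconv t ht]
  have hexpII : ∀ p q : ℝ, IntervalIntegrable (fun s => A * Real.exp (2*b*s)) volume p q := by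
    intro p q
    apply Continuous.intervalIntegrable
    fun_prop
  have hexpint : ∀ T:ℝ, (∫ t in (0:ℝ)..T, A * Real.exp (2*b*t)) = A * (1 - Real.exp (2*b*T)) / β := by
    intro T
    rw [intervalIntegral.integral_const_mul]
    have h1 := expInt (2*b) 0 T (by linarith)
    simp only [mul_zero, Real.exp_zero] at h1
    rw [h1, hβdef]
    have hne : (2*b) ≠ 0 := by linarith
    field_simp
    ring
  -- the master identity
  have hIdent : ∀ T:ℝ, 0 ≤ T → (∫ t in (0:ℝ)..T, y t)
      = A * (1 - Real.exp (2*b*T)) / β + ∫ s in (0:ℝ)..T, y s * Gf (T-s) := by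
    intro T hT
    obtain ⟨K, hK0, hK⟩ := hyK T hT
    have hFub := fubini_conv g₀ y (by rw [hg₀def]; exact g0_meas α b (c^2) B) hymeas hT
      (fun v hv => by rw [hg₀def]; exact g0_bdd α b (c^2) B hb hc20 hB0 v hv.1) hK
    have e1 : (∫ t in (0:ℝ)..T, ∫ s in (0:ℝ)..t, g₀ (t-s) * y s)
        = ∫ t in (0:ℝ)..T, (y t - A * Real.exp (2*b*t)) := by
      apply integral_congr
      intro t ht
      rw [uIcc_of_le hT] at ht
      dsimp only
      have := hyeq t ht.1
      linarith
    have e2 : ∫ t in (0:ℝ)..T, (y t - A * Real.exp (2*b*t))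
        = (∫ t in (0:ℝ)..T, y t) - A * (1 - Real.exp (2*b*T))/β := by
      rw [integral_sub (hyII 0 T le_rfl hT) (hexpII 0 T), hexpint T]
    have e3 : (∫ s in (0:ℝ)..T, y s * ∫ v in (0:ℝ)..(T-s), g₀ v)
        = ∫ s in (0:ℝ)..T, y s * Gf (T-s) := by
      apply integral_congr
      intro s hs
      rw [uIcc_of_le hT] at hs
      dsimp only
      rw [hGfInt (T-s) (by linarith [hs.2])]
    rw [e1, e2, e3] at hFub
    linarith
  -- M in explicit form
  have hMeq : ∀ t:ℝ, 0 ≤ t → M t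
      = x₀^2 * Real.exp (2*b*t) + ∫ s in (0:ℝ)..t, Real.exp (2*b*(t-s)) * y s := by
    intro t ht
    rw [hM t ht, hxsq t]
    congr 1
    apply integral_congr
    intro s hs
    rw [uIcc_of_le ht] at hs
    dsimp only
    rw [hr (t-s), if_pos (by linarith [hs.2] : (0:ℝ) ≤ t - s), hsq (t-s)]
  -- integrability of the weighted integrand
  have hekmeas : ∀ t:ℝ, Measurable (fun s => Real.exp (2*b*(t-s)) * y s) := by
    intro t
    exact (Real.measurable_exp.comp ((measurable_const.sub measurable_id).const_mul (2*b))).mul hymeas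
  have hekII : ∀ t:ℝ, 0 ≤ t → ∀ p q : ℝ, 0 ≤ p → p ≤ q → q ≤ t →
      IntervalIntegrable (fun s => Real.exp (2*b*(t-s)) * y s) volume p q := by
    intro t ht p q hp hpq hqt
    obtain ⟨K, hK0, hK⟩ := hyK t ht
    apply bddIntInt (hekmeas t) hpq
    intro s hs
    have hs0 : 0 ≤ s := hp.trans hs.1
    have hst : s ≤ t := hs.2.trans hqt
    have h1 : Real.exp (2*b*(t-s)) ≤ 1 := Real.exp_le_one_iff.2 (by nlinarith)
    rw [abs_mul, abs_of_nonneg (Real.exp_pos _).le]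
    calc Real.exp (2*b*(t-s)) * |y s| ≤ 1 * K :=
          mul_le_mul h1 (hK s ⟨hs0, hst⟩) (abs_nonneg _) one_pos.le
      _ = K := one_mul K
  have hφnn : ∀ t:ℝ, 0 ≤ t → 0 ≤ ∫ s in (0:ℝ)..t, Real.exp (2*b*(t-s)) * y s := by
    intro t ht
    apply integral_nonneg ht
    intro s hs
    exact mul_nonneg (Real.exp_pos _).le (hynn s hs.1)
  have hGfII : ∀ T:ℝ, 0 ≤ T → IntervalIntegrable (fun s => y s * Gf (T-s)) volume 0 T := by
    intro T hT
    obtain ⟨K, hK0, hK⟩ := hyK T hT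
    have hm : Measurable (fun s => y s * Gf (T-s)) :=
      hymeas.mul (hGfmeas.comp (measurable_const.sub measurable_id))
    apply bddIntInt hm hT
    intro s hs
    have hu : (0:ℝ) ≤ T - s := by linarith [hs.2]
    rw [abs_mul, abs_of_nonneg (hGfnn (T-s) hu)]
    exact mul_le_mul (hK s hs) (hGfub (T-s) hu) (hGfnn (T-s) hu) hK0
  -- exp tends to 0
  have hexp0 : Tendsto (fun t:ℝ => Real.exp (2*b*t)) atTop (nhds 0) :=
    Real.tendsto_exp_atBot.comp ((tendsto_const_mul_atBot_of_neg h2b).2 tendsto_id)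
  -- the stability criterion is equivalent to L < 1
  have hP : c^2 + d^2 + 2*c*d*Real.exp (b*α) = c^2*(1 - Real.exp (2*b*α)) + B*Real.exp (2*b*α) := by
    rw [hBdef, ← hsq α, Real.exp_neg]
    have hE : Real.exp (b*α) ≠ 0 := (Real.exp_pos _).ne'
    field_simp
    ring
  have hiff : (c ^ 2 + d ^ 2 + 2 * c * d * Real.exp (b * α) < -2 * b) ↔ L < 1 := by
    rw [hP, hLdef, div_lt_one hβ, hβdef]
    constructor <;> intro h <;> linarith
  rw [hiff]
  constructor
  · -- M → 0 implies L < 1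
    intro hTend
    by_contra hL1
    push_neg at hL1
    -- B > 0 from nondegeneracy
    have hBpos : 0 < B := by
      rcases lt_or_eq_of_le hB0 with h | h
      · exact h
      · exfalso
        have hzero : c + d * Real.exp (-(b*α)) = 0 := by
          have := h.symm
          rw [hBdef] at this
          exact pow_eq_zero_iff (n := 2) (by norm_num) |>.1 this
        by_cases hc : c = 0
        · have hd : d = 0 := by
            rw [hc, zero_add] at hzero
            have := (Real.exp_pos (-(b*α))).ne'
            exact (mul_eq_zero.1 hzero).resolve_right this
          have hLval : L = 0 := by
            rw [hLdef, ← h, hc]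
            ring
          rw [hLval] at hL1
          linarith
        · have hEpos : (0:ℝ) < Real.exp (b*α) := Real.exp_pos _
          have hd : d = -c * Real.exp (b*α) := by
            have h2 : d * Real.exp (-(b*α)) = -c := by linarith
            rw [Real.exp_neg] at h2
            field_simp at h2
            linarith
          apply hnondeg
          constructor
          · rw [hd]
            have hc2p : 0 < c^2 := by positivity
            nlinarith
          · rw [hd]
            have : -(-c * Real.exp (b*α)) / c = Real.exp (b*α) := by
              field_simp
            rw [this, Real.log_exp]
            field_simp
    have hApos : 0 < A := by
      rw [hAdef]
      have : 0 < x₀^2 := by positivity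
      exact mul_pos this hBpos
    have hCgpos : 0 < (c^2+B)/β := by positivity
    set Cg := (c^2+B)/β with hCgdef
    -- the key lower bound on the weighted integral
    have key2 : ∀ T:ℝ, 0 ≤ T → A * (1 - Real.exp (2*b*T))/β
        ≤ Cg * ∫ s in (0:ℝ)..T, Real.exp (2*b*(T-s)) * y s := by
      intro T hT
      have hint := hIdent T hT
      have hsub : (∫ t in (0:ℝ)..T, y t) - (∫ s in (0:ℝ)..T, y s * Gf (T-s))
          = ∫ s in (0:ℝ)..T, (y s - y s * Gf (T-s)) := by
        rw [integral_sub (hyII 0 T le_rfl hT) (hGfII T hT)]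
      have hmono : (∫ s in (0:ℝ)..T, (y s - y s * Gf (T-s)))
          ≤ ∫ s in (0:ℝ)..T, Cg * (Real.exp (2*b*(T-s)) * y s) := by
        apply integral_mono_on hT ((hyII 0 T le_rfl hT).sub (hGfII T hT))
          ((hekII T hT 0 T le_rfl hT le_rfl).const_mul Cg)
        intro s hs
        have hu : (0:ℝ) ≤ T - s := by linarith [hs.2]
        have h1 : 1 - Gf (T-s) ≤ Cg * Real.exp (2*b*(T-s)) := by
          have := hGfLb (T-s) hu
          have := hGfL (T-s) hu
          rw [← hCgdef] at *
          linarith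
        have hy0 := hynn s hs.1
        calc y s - y s * Gf (T-s) = y s * (1 - Gf (T-s)) := by ring
          _ ≤ y s * (Cg * Real.exp (2*b*(T-s))) := mul_le_mul_of_nonneg_left h1 hy0
          _ = Cg * (Real.exp (2*b*(T-s)) * y s) := by ring
      rw [intervalIntegral.integral_const_mul] at hmono
      linarith
    -- choose a time where everything is small
    set δ := (A/(2*β))/Cg with hδdef
    have hδpos : 0 < δ := by rw [hδdef]; positivity
    have hev1 : ∀ᶠ t:ℝ in atTop, M t < δ := hTend.eventually_lt_const hδpos
    have hev2 : ∀ᶠ t:ℝ in atTop, Real.exp (2*b*t) < 1/2 :=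
      hexp0.eventually_lt_const (by norm_num)
    obtain ⟨t₀, hM0, he, ht0⟩ := (hev1.and (hev2.and (eventually_ge_atTop (0:ℝ)))).exists
    have hk := key2 t₀ ht0
    have h1 : A/(2*β) ≤ A * (1 - Real.exp (2*b*t₀))/β := by
      rw [div_le_div_iff₀ (show (0:ℝ) < 2*β by linarith) hβ]
      nlinarith [mul_pos (mul_pos hApos hβ) (show (0:ℝ) < 1 - 2*Real.exp (2*b*t₀) by linarith)]
    have hφδ : δ ≤ ∫ s in (0:ℝ)..t₀, Real.exp (2*b*(t₀-s)) * y s := by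
      rw [hδdef, div_le_iff₀ hCgpos]
      calc A/(2*β) ≤ Cg * ∫ s in (0:ℝ)..t₀, Real.exp (2*b*(t₀-s)) * y s := by linarith
        _ = (∫ s in (0:ℝ)..t₀, Real.exp (2*b*(t₀-s)) * y s) * Cg := by ring
    have hMget : (∫ s in (0:ℝ)..t₀, Real.exp (2*b*(t₀-s)) * y s) ≤ M t₀ := by
      rw [hMeq t₀ ht0]
      have : 0 ≤ x₀^2 * Real.exp (2*b*t₀) := by positivity
      linarith
    linarith
  · -- L < 1 implies M → 0
    intro hL
    have hA0 : 0 ≤ A := mul_nonneg (sq_nonneg _) hB0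
    have hIub : ∀ T:ℝ, 0 ≤ T → (∫ t in (0:ℝ)..T, y t) ≤ (A/β)/(1-L) := by
      intro T hT
      have hint := hIdent T hT
      have hmono : (∫ s in (0:ℝ)..T, y s * Gf (T-s)) ≤ ∫ s in (0:ℝ)..T, L * y s := by
        apply integral_mono_on hT (hGfII T hT) ((hyII 0 T le_rfl hT).const_mul L)
        intro s hs
        have hu : (0:ℝ) ≤ T - s := by linarith [hs.2]
        calc y s * Gf (T-s) ≤ y s * L :=
              mul_le_mul_of_nonneg_left (hGfL (T-s) hu) (hynn s hs.1)
          _ = L * y s := by ring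
      rw [intervalIntegral.integral_const_mul] at hmono
      have hA1 : A * (1 - Real.exp (2*b*T))/β ≤ A/β := by
        apply (div_le_div_iff_of_pos_right hβ).2
        nlinarith [Real.exp_pos (2*b*T)]
      have hI0 : 0 ≤ ∫ t in (0:ℝ)..T, y t := integral_nonneg hT (fun u hu => hynn u hu.1)
      rw [le_div_iff₀ (by linarith : (0:ℝ) < 1 - L)]
      nlinarith
    -- the supremum of partial integrals
    set S := sSup ((fun T => ∫ t in (0:ℝ)..T, y t) '' Ici 0) with hSdef
    have hbdd : BddAbove ((fun T => ∫ t in (0:ℝ)..T, y t) '' Ici 0) := by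
      refine ⟨(A/β)/(1-L), ?_⟩
      rintro z ⟨T, hT, rfl⟩
      exact hIub T hT
    have hnes : ((fun T => ∫ t in (0:ℝ)..T, y t) '' Ici 0).Nonempty :=
      ⟨_, Set.mem_image_of_mem _ (Set.self_mem_Ici)⟩
    have hSle : ∀ T:ℝ, 0 ≤ T → (∫ t in (0:ℝ)..T, y t) ≤ S :=
      fun T hT => le_csSup hbdd (Set.mem_image_of_mem _ hT)
    have hS0 : 0 ≤ S := by
      have := hSle 0 le_rfl
      rwa [intervalIntegral.integral_same] at this
    apply Metric.tendsto_atTop.2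
    intro ε hε
    obtain ⟨z, ⟨T₀, hT₀, rfl⟩, hz⟩ := exists_lt_of_lt_csSup hnes
      (show S - ε/3 < S by linarith)
    have htail : ∀ t:ℝ, T₀ ≤ t → (∫ s in T₀..t, y s) ≤ ε/3 := by
      intro t ht
      have hsplit : (∫ s in (0:ℝ)..T₀, y s) + (∫ s in T₀..t, y s) = ∫ s in (0:ℝ)..t, y s :=
        integral_add_adjacent_intervals (hyII 0 T₀ le_rfl hT₀) (hyII T₀ t hT₀ ht)
      have := hSle t (hT₀.trans ht)
      linarith
    have hev1 : ∀ᶠ t:ℝ in atTop, x₀^2 * Real.exp (2*b*t) < ε/3 := by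
      have h := hexp0.const_mul (x₀^2)
      rw [mul_zero] at h
      exact h.eventually_lt_const (by linarith)
    have hev2 : ∀ᶠ t:ℝ in atTop, Real.exp (2*b*t) * (Real.exp (-(2*b*T₀)) * S) < ε/3 := by
      have h := hexp0.mul_const (Real.exp (-(2*b*T₀)) * S)
      rw [zero_mul] at h
      exact h.eventually_lt_const (by linarith)
    obtain ⟨N, hN⟩ := (hev1.and (hev2.and (eventually_ge_atTop (max T₀ 0)))).exists_forall_of_atTop
    refine ⟨N, fun t ht => ?_⟩
    obtain ⟨h1, h2, h3⟩ := hN t ht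
    have ht0 : (0:ℝ) ≤ t := le_trans (le_max_right _ _) h3
    have htT₀ : T₀ ≤ t := le_trans (le_max_left _ _) h3
    -- split the convolution integral at T₀
    have hsplit : (∫ s in (0:ℝ)..T₀, Real.exp (2*b*(t-s)) * y s)
        + (∫ s in T₀..t, Real.exp (2*b*(t-s)) * y s)
        = ∫ s in (0:ℝ)..t, Real.exp (2*b*(t-s)) * y s :=
      integral_add_adjacent_intervals (hekII t ht0 0 T₀ le_rfl hT₀ htT₀)
        (hekII t ht0 T₀ t hT₀ htT₀ le_rfl)
    have hφ1 : (∫ s in (0:ℝ)..T₀, Real.exp (2*b*(t-s)) * y s)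
        ≤ Real.exp (2*b*t) * (Real.exp (-(2*b*T₀)) * S) := by
      have e1 : (∫ s in (0:ℝ)..T₀, Real.exp (2*b*(t-s)) * y s)
          ≤ ∫ s in (0:ℝ)..T₀, Real.exp (2*b*(t-T₀)) * y s := by
        apply integral_mono_on hT₀ (hekII t ht0 0 T₀ le_rfl hT₀ htT₀)
          ((hyII 0 T₀ le_rfl hT₀).const_mul _)
        intro s hs
        have hle : Real.exp (2*b*(t-s)) ≤ Real.exp (2*b*(t-T₀)) :=
          Real.exp_le_exp.2 (by nlinarith [hs.2])
        exact mul_le_mul_of_nonneg_right hle (hynn s hs.1)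
      rw [intervalIntegral.integral_const_mul] at e1
      have e2 : Real.exp (2*b*(t-T₀)) = Real.exp (2*b*t) * Real.exp (-(2*b*T₀)) := by
        rw [← Real.exp_add]
        ring_nf
      have e3 : (∫ s in (0:ℝ)..T₀, y s) ≤ S := hSle T₀ hT₀
      have e4 : 0 ≤ ∫ s in (0:ℝ)..T₀, y s := integral_nonneg hT₀ (fun u hu => hynn u hu.1)
      calc (∫ s in (0:ℝ)..T₀, Real.exp (2*b*(t-s)) * y s)
          ≤ Real.exp (2*b*(t-T₀)) * ∫ s in (0:ℝ)..T₀, y s := e1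
        _ ≤ Real.exp (2*b*(t-T₀)) * S := mul_le_mul_of_nonneg_left e3 (Real.exp_pos _).le
        _ = Real.exp (2*b*t) * (Real.exp (-(2*b*T₀)) * S) := by rw [e2]; ring
    have hφ2 : (∫ s in T₀..t, Real.exp (2*b*(t-s)) * y s) ≤ ε/3 := by
      have e1 : (∫ s in T₀..t, Real.exp (2*b*(t-s)) * y s) ≤ ∫ s in T₀..t, y s := by
        apply integral_mono_on htT₀ (hekII t ht0 T₀ t hT₀ htT₀ le_rfl)
          (hyII T₀ t hT₀ htT₀)
        intro s hs
        have hle : Real.exp (2*b*(t-s)) ≤ 1 := Real.exp_le_one_iff.2 (by nlinarith [hs.2])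
        nlinarith [hynn s (hT₀.trans hs.1)]
      exact e1.trans (htail t htT₀)
    have hM0 : 0 ≤ M t := by
      rw [hMeq t ht0]
      have := hφnn t ht0
      positivity
    rw [Real.dist_eq, sub_zero, abs_of_nonneg hM0, hMeq t ht0]
    linarith
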